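/- For every sufficiently large integer n divisible by 16, the derived graph F_{S_n} has minimum degree at least n/9. -/

import Mathlib

/-- `Sedge n x y z` : `{x, y, z}` with `x < y < z` is an edge of the `3`-uniform
hypergraph `S_n` on `{1, …, n}`, i.e. `x + y + z = n` or `x + y + z = 2n`. -/
def Sedge (n x y z : ℕ) : Prop :=
  1 ≤ x ∧ x < y ∧ y < z ∧ z ≤ n ∧ (x + y + z = n ∨ x + y + z = 2 * n)

/-- The derived graph `F_{S_n}`: `a` and `b` are adjacent iff some edge `x < y < z`
of `S_n` has `{a, b} = {x, z}`. -/
def FS (n : ℕ) : SimpleGraph ℕ where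
  Adj a b := (∃ y, Sedge n a y b) ∨ (∃ y, Sedge n b y a)
  symm := ⟨fun _ _ h => h.symm⟩
  loopless := ⟨fun a h => by
    rcases h with ⟨y, h1, h2, h3, h4, h5⟩ | ⟨y, h1, h2, h3, h4, h5⟩ <;> omega⟩

lemma nbhd_finite (n x : ℕ) : ((FS n).neighborSet x).Finite := by
  apply Set.Finite.subset (Set.finite_Icc 1 n)
  intro b hb
  simp only [SimpleGraph.mem_neighborSet, FS] at hb
  rcases hb with ⟨y, h1, h2, h3, h4, h5⟩ | ⟨y, h1, h2, h3, h4, h5⟩ <;>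
    simp only [Set.mem_Icc] <;> omega

lemma card_le_nbhd (n x lo hi : ℕ)
    (h : ∀ z ∈ Finset.Icc lo hi, (FS n).Adj x z) :
    hi + 1 - lo ≤ ((FS n).neighborSet x).ncard := by
  have hsub : (Finset.Icc lo hi : Set ℕ) ⊆ (FS n).neighborSet x := by
    intro z hz
    simp only [Finset.coe_Icc, Set.mem_Icc] at hz
    exact h z (Finset.mem_Icc.mpr hz)
  have := Set.ncard_le_ncard hsub (nbhd_finite n x)
  rwa [Set.ncard_coe_finset, Nat.card_Icc] at this

/-- For every sufficiently large `n` divisible by `16`, the derived graph `F_{S_n}` has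
minimum degree at least `n/9`: every vertex `x ∈ {1, …, n}` has at least `n/9`
neighbours. -/
theorem FS_min_degree : ∃ N : ℕ, ∀ n : ℕ, N ≤ n → 16 ∣ n →
    ∀ x ∈ Finset.Icc 1 n, n ≤ 9 * ((FS n).neighborSet x).ncard := by
  refine ⟨80, fun n hn h16 x hx => ?_⟩
  obtain ⟨m, rfl⟩ := h16
  have hm : 5 ≤ m := by omega
  rw [Finset.mem_Icc] at hx
  obtain ⟨hx1, hxn⟩ := hx
  rcases le_or_gt x (4 * m) with hc | hc
  · -- x smallest, sum = n
    have := card_le_nbhd (16 * m) x (14 * m - 2 * x + 1) (16 * m - 2 * x - 1)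
      (fun z hz => by
        rw [Finset.mem_Icc] at hz
        exact Or.inl ⟨16 * m - x - z, by unfold Sedge; omega⟩)
    omega
  rcases le_or_gt x (8 * m) with hc2 | hc2
  · -- x smallest, sum = 2n
    have := card_le_nbhd (16 * m) x (14 * m + 1) (16 * m - 1)
      (fun z hz => by
        rw [Finset.mem_Icc] at hz
        exact Or.inl ⟨2 * (16 * m) - x - z, by unfold Sedge; omega⟩)
    omega
  rcases le_or_gt x (12 * m) with hc3 | hc3
  · -- x largest, sum = n
    have := card_le_nbhd (16 * m) x 1 (2 * m - 1)
      (fun z hz => by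
        rw [Finset.mem_Icc] at hz
        exact Or.inr ⟨16 * m - x - z, by unfold Sedge; omega⟩)
    omega
  · -- x largest, sum = 2n
    have := card_le_nbhd (16 * m) x (2 * (16 * m) - 2 * x + 1)
      (2 * (16 * m) - 2 * x + 2 * m - 1)
      (fun z hz => by
        rw [Finset.mem_Icc] at hz
        exact Or.inr ⟨2 * (16 * m) - x - z, by unfold Sedge; omega⟩)
    omega
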